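/- Let Q be an n×n orthogonal projection and ξ : [0,∞) → M_n(ℂ) continuous with ξ(x)·Q = ξ(x) for all x. Define Ω(x) := Q + ∫₀ˣ ξ(y)†ξ(y) dy. Then: (i) for every x ≥ 0 and every nonzero v ∈ ℂⁿ with Q·v = v, one has v†·Ω(x)·v > 0, so the restriction of Ω(x) to the range of Q is positive definite (in particular invertible); and (ii) if Ω⁺ : [0,∞) → M_n(ℂ) satisfies Ω(x)Ω⁺(x) = Ω⁺(x)Ω(x) = Q and Ω⁺(x)·Q = Q·Ω⁺(x) = Ω⁺(x) for all x, then 𝒜(x,y) := −ξ(x)·Ω⁺(x)·ξ(y)† satisfies the Gel'fand–Levitan equation 𝒜(x,y) + G(x,y) + ∫₀ˣ 𝒜(x,z)·G(z,y) dz = 0 for 0 ≤ y ≤ x with the degenerate kernel G(x,y) := ξ(x)·ξ(y)†. (Theorem 8.2: the solution of the Gel'fand–Levitan system when a bound state is added.) -/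

import Mathlib

open Matrix MeasureTheory Set

attribute [local instance] Matrix.normedAddCommGroup Matrix.normedSpace

/-- Theorem 8.2: the solution of the Gel'fand–Levitan system when a bound state is added.
With `Ω(x) = Q + ∫₀ˣ ξ†ξ`: (i) `v†·Ω(x)·v > 0` for every `x ≥ 0` and every nonzero `v`
with `Q·v = v`; (ii) if `Ω⁺` satisfies `Ω·Ω⁺ = Ω⁺·Ω = Q` and `Ω⁺·Q = Q·Ω⁺ = Ω⁺`,
then `𝒜(x,y) = −ξ(x)·Ω⁺(x)·ξ(y)†` satisfies the Gel'fand–Levitan equation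
`𝒜(x,y) + G(x,y) + ∫₀ˣ 𝒜(x,z)·G(z,y) dz = 0` for `0 ≤ y ≤ x`, with
`G(x,y) = ξ(x)·ξ(y)†`. -/
theorem gelfand_levitan_solution_add_bound_state {n : ℕ}
    (Q : Matrix (Fin n) (Fin n) ℂ)
    (hQproj : Q * Q = Q) (hQherm : Qᴴ = Q)
    (ξ : ℝ → Matrix (Fin n) (Fin n) ℂ)
    (hξc : ContinuousOn ξ (Set.Ici (0:ℝ)))
    (hξQ : ∀ x ≥ (0:ℝ), ξ x * Q = ξ x) :
    (∀ x ≥ (0:ℝ), ∀ v : Fin n → ℂ, v ≠ 0 → Q *ᵥ v = v →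
      0 < (star v ⬝ᵥ ((Q + ∫ y in (0:ℝ)..x, (ξ y)ᴴ * ξ y) *ᵥ v)).re) ∧
    (∀ Ωp : ℝ → Matrix (Fin n) (Fin n) ℂ,
      (∀ x ≥ (0:ℝ), (Q + ∫ y in (0:ℝ)..x, (ξ y)ᴴ * ξ y) * Ωp x = Q) →
      (∀ x ≥ (0:ℝ), Ωp x * (Q + ∫ y in (0:ℝ)..x, (ξ y)ᴴ * ξ y) = Q) →
      (∀ x ≥ (0:ℝ), Ωp x * Q = Ωp x) →
      (∀ x ≥ (0:ℝ), Q * Ωp x = Ωp x) →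
      ∀ x y : ℝ, 0 ≤ y → y ≤ x →
        -(ξ x * Ωp x * (ξ y)ᴴ) + ξ x * (ξ y)ᴴ
          + ∫ z in (0:ℝ)..x, -(ξ x * Ωp x * (ξ z)ᴴ) * (ξ z * (ξ y)ᴴ) = 0) := by
  -- continuity and integrability of the kernel
  have hcont : ∀ x ≥ (0:ℝ), ContinuousOn (fun y => (ξ y)ᴴ * ξ y) (Set.uIcc (0:ℝ) x) := by
    intro x hx
    have hsub : Set.uIcc (0:ℝ) x ⊆ Set.Ici (0:ℝ) := by
      rw [Set.uIcc_of_le hx]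
      exact fun t ht => ht.1
    have hc : ContinuousOn ξ (Set.uIcc (0:ℝ) x) := hξc.mono hsub
    have hg : Continuous (fun M : Matrix (Fin n) (Fin n) ℂ => Mᴴ * M) :=
      (continuous_id.matrix_conjTranspose).matrix_mul continuous_id
    exact hg.comp_continuousOn hc
  letI : ENormedAddMonoid (Matrix (Fin n) (Fin n) ℂ) :=
    NormedAddCommGroup.toENormedAddCommMonoid.toENormedAddMonoid
  have hInt : ∀ x ≥ (0:ℝ),
      IntervalIntegrable (fun y => (ξ y)ᴴ * ξ y) volume 0 x := by
    intro x hx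
    exact (hcont x hx).intervalIntegrable
  constructor
  · -- Part (i)
    intro x hx v hv hQv
    -- the continuous linear functional M ↦ star v ⬝ᵥ M *ᵥ v
    set L : Matrix (Fin n) (Fin n) ℂ →ₗ[ℂ] ℂ :=
      { toFun := fun M => star v ⬝ᵥ (M *ᵥ v)
        map_add' := by intro A B; simp [Matrix.add_mulVec, dotProduct_add]
        map_smul' := by
          intro c A
          simp [Matrix.smul_mulVec, dotProduct_smul] } with hL
    have hLc : ∀ M, (LinearMap.toContinuousLinearMap L) M = star v ⬝ᵥ (M *ᵥ v) := fun M => rfl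
    have key : star v ⬝ᵥ ((∫ y in (0:ℝ)..x, (ξ y)ᴴ * ξ y) *ᵥ v)
        = ∫ y in (0:ℝ)..x, star v ⬝ᵥ (((ξ y)ᴴ * ξ y) *ᵥ v) := by
      rw [← hLc]
      erw [← (LinearMap.toContinuousLinearMap L).intervalIntegral_comp_comm (hInt x hx)]
      rfl
    have hre : ((∫ y in (0:ℝ)..x, star v ⬝ᵥ (((ξ y)ᴴ * ξ y) *ᵥ v))).re
        = ∫ y in (0:ℝ)..x, (star v ⬝ᵥ (((ξ y)ᴴ * ξ y) *ᵥ v)).re := by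
      have hgi : IntervalIntegrable (fun t => star v ⬝ᵥ (((ξ t)ᴴ * ξ t) *ᵥ v)) volume 0 x := by
        have : ContinuousOn (fun t => (LinearMap.toContinuousLinearMap L) ((ξ t)ᴴ * ξ t))
            (Set.uIcc (0:ℝ) x) :=
          (LinearMap.toContinuousLinearMap L).continuous.comp_continuousOn (hcont x hx)
        exact this.intervalIntegrable
      have h := Complex.reCLM.intervalIntegral_comp_comm hgi
      exact h.symm
    have hpos : 0 < (star v ⬝ᵥ (Q *ᵥ v)).re := by
      rw [hQv]
      have : (star v ⬝ᵥ v).re = ∑ i, Complex.normSq (v i) := by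
        simp [dotProduct, Complex.normSq_apply, Complex.add_re]
      rw [this]
      obtain ⟨i, hi⟩ := Function.ne_iff.mp hv
      apply Finset.sum_pos' (fun j _ => Complex.normSq_nonneg _)
      exact ⟨i, Finset.mem_univ i, Complex.normSq_pos.mpr hi⟩
    have hnn : 0 ≤ ∫ y in (0:ℝ)..x, (star v ⬝ᵥ (((ξ y)ᴴ * ξ y) *ᵥ v)).re := by
      apply intervalIntegral.integral_nonneg hx
      intro u _
      open scoped ComplexOrder in
      exact (Matrix.posSemidef_conjTranspose_mul_self (ξ u)).re_dotProduct_nonneg v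
    rw [Matrix.add_mulVec, dotProduct_add, Complex.add_re, key, hre]
    linarith
  · -- Part (ii)
    intro Ωp hΩ1 hΩ2 hΩQ hQΩ x y hy hyx
    have hx : (0:ℝ) ≤ x := le_trans hy hyx
    set S := ∫ z in (0:ℝ)..x, (ξ z)ᴴ * ξ z with hS
    -- pull the constant factors out of the integral
    set L : Matrix (Fin n) (Fin n) ℂ →ₗ[ℂ] Matrix (Fin n) (Fin n) ℂ :=
      { toFun := fun M => -(ξ x * Ωp x * M * (ξ y)ᴴ)
        map_add' := by intro A B; noncomm_ring
        map_smul' := by intro c A; simp [Matrix.mul_smul, Matrix.smul_mul] } with hLdef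
    have hLc : ∀ M, (LinearMap.toContinuousLinearMap L) M = -(ξ x * Ωp x * M * (ξ y)ᴴ) :=
      fun M => rfl
    have key : (∫ z in (0:ℝ)..x, -(ξ x * Ωp x * (ξ z)ᴴ) * (ξ z * (ξ y)ᴴ))
        = -(ξ x * Ωp x * S * (ξ y)ᴴ) := by
      rw [← hLc]
      erw [← (LinearMap.toContinuousLinearMap L).intervalIntegral_comp_comm (hInt x hx)]
      congr 1
      funext z
      erw [hLc]
      noncomm_ring
    rw [key]
    have hΩS : Ωp x * S = Q - Ωp x := by
      have h := hΩ2 x hx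
      rw [Matrix.mul_add, ← hS] at h
      have := hΩQ x hx
      rw [this] at h
      linear_combination (norm := noncomm_ring) h
    have hxS : ξ x * Ωp x * S = ξ x - ξ x * Ωp x := by
      calc ξ x * Ωp x * S = ξ x * (Ωp x * S) := by rw [Matrix.mul_assoc]
        _ = ξ x * (Q - Ωp x) := by rw [hΩS]
        _ = ξ x * Q - ξ x * Ωp x := by rw [Matrix.mul_sub]
        _ = ξ x - ξ x * Ωp x := by rw [hξQ x hx]
    rw [hxS]
    noncomm_ring
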